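/- Let m, n ≥ 2 be integers with n even, let r = ρ_0 be the unit rotation of the first row and c = γ_0 the unit rotation of the first column of the m × n Torus Puzzle. Then the net permutation of the sequence of rotations C_1 R² C_1^{m−1} R (C_1 R C_1^{m−1} R)^{n/2 − 1}, applied left to right, namely the composition (r ∘ c^{m−1} ∘ r ∘ c)^{n/2 − 1} ∘ (r ∘ c^{m−1} ∘ r² ∘ c), equals the transposition of the positions (0, 0) and (0, n − 1), fixing all other positions. -/

import Mathlib

/- Unit rightward rotation of row i of the m x n Torus Puzzle. -/
def rowRot (m n : ℕ) (i : Fin m) : Equiv.Perm (Fin m × Fin n) where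
  toFun p := if p.1 = i then (i, finRotate n p.2) else p
  invFun p := if p.1 = i then (i, (finRotate n).symm p.2) else p
  left_inv := by rintro ⟨a, b⟩; by_cases h : a = i <;> simp [h, -finRotate_apply, -finRotate_symm_apply]
  right_inv := by rintro ⟨a, b⟩; by_cases h : a = i <;> simp [h, -finRotate_apply, -finRotate_symm_apply]

/- Unit downward rotation of column j of the m x n Torus Puzzle. -/
def colRot (m n : ℕ) (j : Fin n) : Equiv.Perm (Fin m × Fin n) where
  toFun p := if p.2 = j then (finRotate m p.1, j) else p
  invFun p := if p.2 = j then ((finRotate m).symm p.1, j) else p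
  left_inv := by rintro ⟨a, b⟩; by_cases h : b = j <;> simp [h, -finRotate_apply, -finRotate_symm_apply]
  right_inv := by rintro ⟨a, b⟩; by_cases h : b = j <;> simp [h, -finRotate_apply, -finRotate_symm_apply]

/- The set S(m,n) of the m + n unit rotations. -/
def unitRotations (m n : ℕ) : Set (Equiv.Perm (Fin m × Fin n)) :=
  Set.range (rowRot m n) ∪ Set.range (colRot m n)

namespace TorusAux

lemma mod_helper {a b n : ℕ} (hb : b < n) (h : a = b ∨ a = b + n) : a % n = b := by
  rcases h with rfl | rfl
  · exact Nat.mod_eq_of_lt hb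
  · rw [Nat.add_mod_right]; exact Nat.mod_eq_of_lt hb

lemma mod_succ {t n s : ℕ} (h : t % (n+1) = s) (hlt : s < n) : (t+1) % (n+1) = s+1 := by
  have h1 : 1 % (n+1) = 1 := Nat.mod_eq_of_lt (by omega)
  rw [Nat.add_mod, h, h1]
  exact Nat.mod_eq_of_lt (by omega)

lemma mod_succ_top {t n : ℕ} (hn : 1 ≤ n) (h : t % (n+1) = n) : (t+1) % (n+1) = 0 := by
  have h1 : 1 % (n+1) = 1 := Nat.mod_eq_of_lt (by omega)
  rw [Nat.add_mod, h, h1, Nat.mod_self]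

lemma finRotate_mk {n : ℕ} (a b : ℕ) (ha : a < n) (hb : b < n)
    (hmod : (a + 1) % n = b) : finRotate n ⟨a, ha⟩ = ⟨b, hb⟩ := by
  have : NeZero n := ⟨by omega⟩
  cases n with
  | zero => omega
  | succ k =>
    rw [finRotate_succ_apply]
    ext
    simp only [Fin.val_add, Fin.val_one', Nat.add_mod_mod]
    exact hmod

variable {m n : ℕ}

lemma row_mk (h0 : 0 < m) (a b : ℕ) (ha : a < n) (hb : b < n) (hmod : (a+1) % n = b) :
    rowRot m n ⟨0, h0⟩ (⟨0, h0⟩, ⟨a, ha⟩) = (⟨0, h0⟩, ⟨b, hb⟩) := by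
  simp only [rowRot, Equiv.coe_fn_mk]
  rw [if_pos trivial, finRotate_mk a b ha hb hmod]

lemma row_ne (h0 : 0 < m) (i : Fin m) (j : Fin n) (h : i.val ≠ 0) :
    rowRot m n ⟨0, h0⟩ (i, j) = (i, j) := by
  simp only [rowRot, Equiv.coe_fn_mk]
  rw [if_neg]
  simp [Fin.ext_iff, h]

lemma col_mk (h0 : 0 < n) (a b : ℕ) (ha : a < m) (hb : b < m) (hmod : (a+1) % m = b) :
    colRot m n ⟨0, h0⟩ (⟨a, ha⟩, ⟨0, h0⟩) = (⟨b, hb⟩, ⟨0, h0⟩) := by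
  simp only [colRot, Equiv.coe_fn_mk]
  rw [if_pos trivial, finRotate_mk a b ha hb hmod]

lemma col_ne (h0 : 0 < n) (i : Fin m) (j : Fin n) (h : j.val ≠ 0) :
    colRot m n ⟨0, h0⟩ (i, j) = (i, j) := by
  simp only [colRot, Equiv.coe_fn_mk]
  rw [if_neg]
  simp [Fin.ext_iff, h]

lemma colpow_mk (h0 : 0 < n) (t a b : ℕ) (ha : a < m) (hb : b < m) (hmod : (a+t) % m = b) :
    ((colRot m n ⟨0, h0⟩)^t) (⟨a, ha⟩, ⟨0, h0⟩) = (⟨b, hb⟩, ⟨0, h0⟩) := by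
  induction t generalizing a b with
  | zero => simp at hmod; simp [Nat.mod_eq_of_lt ha] at hmod; subst hmod; rfl
  | succ t ih =>
    have hm0 : 0 < m := by omega
    rw [pow_succ, Equiv.Perm.mul_apply,
      col_mk h0 a ((a+1) % m) ha (Nat.mod_lt _ hm0) rfl,
      ih ((a+1)%m) b (Nat.mod_lt _ hm0) hb (by rw [Nat.mod_add_mod, ← hmod]; congr 1; omega)]

lemma colpow_ne (h0 : 0 < n) (t : ℕ) (i : Fin m) (j : Fin n) (h : j.val ≠ 0) :
    ((colRot m n ⟨0, h0⟩)^t) (i, j) = (i, j) := by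
  induction t with
  | zero => rfl
  | succ t ih => rw [pow_succ, Equiv.Perm.mul_apply, col_ne h0 i j h, ih]

/-- the key permutation P = r * c^(m-1) * r * c -/
def Pp (m n : ℕ) (hm : 2 ≤ m) (hn : 2 ≤ n) : Equiv.Perm (Fin m × Fin n) :=
  rowRot m n ⟨0, Nat.lt_of_lt_of_le (by decide) hm⟩ * (colRot m n ⟨0, Nat.lt_of_lt_of_le (by decide) hn⟩) ^ (m - 1) *
    rowRot m n ⟨0, Nat.lt_of_lt_of_le (by decide) hm⟩ * colRot m n ⟨0, Nat.lt_of_lt_of_le (by decide) hn⟩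

/-- U = c^(m-1) * r * c -/
def Uu (m n : ℕ) (hm : 2 ≤ m) (hn : 2 ≤ n) : Equiv.Perm (Fin m × Fin n) :=
  (colRot m n ⟨0, Nat.lt_of_lt_of_le (by decide) hn⟩) ^ (m - 1) * rowRot m n ⟨0, Nat.lt_of_lt_of_le (by decide) hm⟩ *
    colRot m n ⟨0, Nat.lt_of_lt_of_le (by decide) hn⟩

def Qq (m n : ℕ) (hm : 2 ≤ m) (hn : 2 ≤ n) : Equiv.Perm (Fin m × Fin n) :=
  rowRot m n ⟨0, Nat.lt_of_lt_of_le (by decide) hm⟩ * (colRot m n ⟨0, Nat.lt_of_lt_of_le (by decide) hn⟩) ^ (m - 1) *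
    (rowRot m n ⟨0, Nat.lt_of_lt_of_le (by decide) hm⟩) ^ 2 * colRot m n ⟨0, Nat.lt_of_lt_of_le (by decide) hn⟩

/-- the residue-level cycle parametrization -/
def iotR (m n : ℕ) (hm : 2 ≤ m) (hn : 2 ≤ n) (s : ℕ) : Fin m × Fin n :=
  if h0 : s = 0 then (⟨0, by omega⟩, ⟨0, by omega⟩)
  else if h1 : s ≤ n/2 then (⟨0, by omega⟩, ⟨2*s-1, by omega⟩)
  else if h2 : s = n/2+1 then (⟨m-1, by omega⟩, ⟨0, by omega⟩)
  else if h3 : s ≤ n then (⟨0, by omega⟩, ⟨2*(s-n/2-1), by omega⟩)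
  else (⟨0, by omega⟩, ⟨0, by omega⟩)

def iota (m n : ℕ) (hm : 2 ≤ m) (hn : 2 ≤ n) (t : ℕ) : Fin m × Fin n :=
  iotR m n hm hn (t % (n+1))

variable (hm : 1 < m) (hn : 1 < n)

lemma iota_def (t : ℕ) : iota m n hm hn t = iotR m n hm hn (t % (n+1)) := rfl

lemma iotR_eq0 : iotR m n hm hn 0 = (⟨0, by omega⟩, ⟨0, by omega⟩) := by
  rw [iotR, dif_pos rfl]

lemma iotR_eq1 (s : ℕ) (h1 : 1 ≤ s) (h2 : s ≤ n/2) (hb : 2*s-1 < n) :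
    iotR m n hm hn s = (⟨0, by omega⟩, ⟨2*s-1, hb⟩) := by
  rw [iotR, dif_neg (by omega), dif_pos h2]

lemma iotR_eq2 : iotR m n hm hn (n/2+1) = (⟨m-1, by omega⟩, ⟨0, by omega⟩) := by
  rw [iotR, dif_neg (by omega), dif_neg (by omega), dif_pos rfl]

lemma iotR_eq3 (s : ℕ) (h1 : n/2+2 ≤ s) (h2 : s ≤ n) (hb : 2*(s-n/2-1) < n) :
    iotR m n hm hn s = (⟨0, by omega⟩, ⟨2*(s-n/2-1), hb⟩) := by
  rw [iotR, dif_neg (by omega), dif_neg (by omega), dif_neg (by omega), dif_pos h2]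

lemma iota_eq0 (t : ℕ) (h : t % (n+1) = 0) :
    iota m n hm hn t = (⟨0, by omega⟩, ⟨0, by omega⟩) := by
  rw [iota_def, h, iotR_eq0]

lemma iota_eq1 (t s : ℕ) (h : t % (n+1) = s) (h1 : 1 ≤ s) (h2 : s ≤ n/2) (hb : 2*s-1 < n) :
    iota m n hm hn t = (⟨0, by omega⟩, ⟨2*s-1, hb⟩) := by
  rw [iota_def, h, iotR_eq1 hm hn s h1 h2 hb]

lemma iota_eq2 (t : ℕ) (h : t % (n+1) = n/2+1) :
    iota m n hm hn t = (⟨m-1, by omega⟩, ⟨0, by omega⟩) := by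
  rw [iota_def, h, iotR_eq2]

lemma iota_eq3 (t s : ℕ) (h : t % (n+1) = s) (h1 : n/2+2 ≤ s) (h2 : s ≤ n)
    (hb : 2*(s-n/2-1) < n) :
    iota m n hm hn t = (⟨0, by omega⟩, ⟨2*(s-n/2-1), hb⟩) := by
  rw [iota_def, h, iotR_eq3 hm hn s h1 h2 hb]


lemma row_ne' (h0 : 0 < m) (a : ℕ) (ha : a < m) (j : Fin n) (h : a ≠ 0) :
    rowRot m n ⟨0, h0⟩ (⟨a, ha⟩, j) = (⟨a, ha⟩, j) := row_ne h0 _ _ h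

lemma col_ne' (h0 : 0 < n) (i : Fin m) (b : ℕ) (hb : b < n) (h : b ≠ 0) :
    colRot m n ⟨0, h0⟩ (i, ⟨b, hb⟩) = (i, ⟨b, hb⟩) := col_ne h0 _ _ h

lemma colpow_ne' (h0 : 0 < n) (t : ℕ) (i : Fin m) (b : ℕ) (hb : b < n) (h : b ≠ 0) :
    ((colRot m n ⟨0, h0⟩)^t) (i, ⟨b, hb⟩) = (i, ⟨b, hb⟩) := colpow_ne h0 t _ _ h

lemma P_iota (hne : Even n) (t : ℕ) :
    Pp m n hm hn (iota m n hm hn t) = iota m n hm hn (t+1) := by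
  obtain ⟨l, hl⟩ := hne
  have h0m : (0:ℕ) < m := by omega
  have h0n : (0:ℕ) < n := by omega
  set s := t % (n+1) with hs
  have hslt : s < n+1 := Nat.mod_lt _ (by omega)
  by_cases hs0 : s = 0
  · rw [iota_eq0 hm hn t (by omega),
      iota_eq1 hm hn (t+1) 1 (by rw [mod_succ hs.symm (by omega)]; omega)
        (by omega) (by omega) (by omega)]
    simp only [Pp, Equiv.Perm.mul_apply]
    rw [col_mk h0n 0 1 (by omega) (by omega) (mod_helper (by omega) (by omega)),
      row_ne' h0m 1 (by omega) _ (by omega),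
      colpow_mk h0n (m-1) 1 0 (by omega) (by omega) (mod_helper (by omega) (by omega)),
      row_mk h0m 0 1 (by omega) (by omega) (mod_helper (by omega) (by omega))]
    all_goals simp only [Prod.mk.injEq, Fin.mk.injEq, true_and, and_true]
    all_goals omega
  · by_cases hs1 : s ≤ n/2
    · rw [iota_eq1 hm hn t s hs.symm (by omega) hs1 (by omega)]
      by_cases hhalf : s = n/2
      · rw [iota_eq2 hm hn (t+1) (by rw [mod_succ hs.symm (by omega)]; omega)]
        simp only [Pp, Equiv.Perm.mul_apply]
        rw [col_ne' h0n _ (2*s-1) (by omega) (by omega),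
          row_mk h0m (2*s-1) 0 (by omega) (by omega) (mod_helper (by omega) (by omega)),
          colpow_mk h0n (m-1) 0 (m-1) (by omega) (by omega) (mod_helper (by omega) (by omega)),
          row_ne' h0m (m-1) (by omega) _ (by omega)]
        all_goals simp only [Prod.mk.injEq, Fin.mk.injEq, true_and, and_true]
        all_goals omega
      · rw [iota_eq1 hm hn (t+1) (s+1) (mod_succ hs.symm (by omega)) (by omega)
          (by omega) (by omega)]
        simp only [Pp, Equiv.Perm.mul_apply]
        rw [col_ne' h0n _ (2*s-1) (by omega) (by omega),
          row_mk h0m (2*s-1) (2*s) (by omega) (by omega) (mod_helper (by omega) (by omega)),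
          colpow_ne' h0n (m-1) _ (2*s) (by omega) (by omega),
          row_mk h0m (2*s) (2*s+1) (by omega) (by omega) (mod_helper (by omega) (by omega))]
        all_goals simp only [Prod.mk.injEq, Fin.mk.injEq, true_and, and_true]
        all_goals omega
    · by_cases hs2 : s = n/2+1
      · rw [iota_eq2 hm hn t (by omega)]
        by_cases hn2 : n = 2
        · rw [iota_eq0 hm hn (t+1) (mod_succ_top (by omega) (by omega))]
          simp only [Pp, Equiv.Perm.mul_apply]
          rw [col_mk h0n (m-1) 0 (by omega) (by omega) (mod_helper (by omega) (by omega)),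
            row_mk h0m 0 1 (by omega) (by omega) (mod_helper (by omega) (by omega)),
            colpow_ne' h0n (m-1) _ 1 (by omega) (by omega),
            row_mk h0m 1 0 (by omega) (by omega) (mod_helper (by omega) (by omega))]
          all_goals simp only [Prod.mk.injEq, Fin.mk.injEq, true_and, and_true]
          all_goals omega
        · rw [iota_eq3 hm hn (t+1) (n/2+2) (mod_succ (by omega) (by omega)) (by omega)
            (by omega) (by omega)]
          simp only [Pp, Equiv.Perm.mul_apply]
          rw [col_mk h0n (m-1) 0 (by omega) (by omega) (mod_helper (by omega) (by omega)),
            row_mk h0m 0 1 (by omega) (by omega) (mod_helper (by omega) (by omega)),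
            colpow_ne' h0n (m-1) _ 1 (by omega) (by omega),
            row_mk h0m 1 2 (by omega) (by omega) (mod_helper (by omega) (by omega))]
          all_goals simp only [Prod.mk.injEq, Fin.mk.injEq, true_and, and_true]
          all_goals omega
      · have hb1 : n/2+2 ≤ s := by omega
        have hb2 : s ≤ n := by omega
        rw [iota_eq3 hm hn t s hs.symm hb1 hb2 (by omega)]
        by_cases hstop : s = n
        · rw [iota_eq0 hm hn (t+1) (mod_succ_top (by omega) (by omega))]
          simp only [Pp, Equiv.Perm.mul_apply]
          rw [col_ne' h0n _ (2*(s-n/2-1)) (by omega) (by omega),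
            row_mk h0m (2*(s-n/2-1)) (2*(s-n/2-1)+1) (by omega) (by omega)
              (mod_helper (by omega) (by omega)),
            colpow_ne' h0n (m-1) _ (2*(s-n/2-1)+1) (by omega) (by omega),
            row_mk h0m (2*(s-n/2-1)+1) 0 (by omega) (by omega)
              (mod_helper (by omega) (by omega))]
          all_goals simp only [Prod.mk.injEq, Fin.mk.injEq, true_and, and_true]
          all_goals omega
        · rw [iota_eq3 hm hn (t+1) (s+1) (mod_succ hs.symm (by omega)) (by omega)
            (by omega) (by omega)]
          simp only [Pp, Equiv.Perm.mul_apply]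
          rw [col_ne' h0n _ (2*(s-n/2-1)) (by omega) (by omega),
            row_mk h0m (2*(s-n/2-1)) (2*(s-n/2-1)+1) (by omega) (by omega)
              (mod_helper (by omega) (by omega)),
            colpow_ne' h0n (m-1) _ (2*(s-n/2-1)+1) (by omega) (by omega),
            row_mk h0m (2*(s-n/2-1)+1) (2*(s-n/2-1)+2) (by omega) (by omega)
              (mod_helper (by omega) (by omega))]
          all_goals simp only [Prod.mk.injEq, Fin.mk.injEq, true_and, and_true]
          all_goals omega

lemma P_pow_iota (hne : Even n) (s t : ℕ) :
    ((Pp m n hm hn)^s) (iota m n hm hn t) = iota m n hm hn (t+s) := by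
  induction s generalizing t with
  | zero => rw [pow_zero, Equiv.Perm.one_apply]; rfl
  | succ s ih =>
    rw [pow_succ, Equiv.Perm.mul_apply, P_iota hm hn hne t, ih (t+1)]
    congr 1
    omega

lemma P_fix1 (a b : ℕ) (ha : a < m) (hb : b < n) (h1 : a ≠ 0) (h2 : b ≠ 0) :
    Pp m n hm hn (⟨a, ha⟩, ⟨b, hb⟩) = (⟨a, ha⟩, ⟨b, hb⟩) := by
  have h0m : (0:ℕ) < m := by omega
  have h0n : (0:ℕ) < n := by omega
  simp only [Pp, Equiv.Perm.mul_apply]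
  rw [col_ne' h0n _ b hb h2, row_ne' h0m a ha _ h1, colpow_ne' h0n (m-1) _ b hb h2,
    row_ne' h0m a ha _ h1]

lemma P_fix2 (a : ℕ) (ha : a < m) (h0n : 0 < n) (h1 : a ≠ 0) (h2 : a ≠ m-1) :
    Pp m n hm hn (⟨a, ha⟩, ⟨0, h0n⟩) = (⟨a, ha⟩, ⟨0, h0n⟩) := by
  have h0m : (0:ℕ) < m := by omega
  simp only [Pp, Equiv.Perm.mul_apply]
  rw [col_mk h0n a (a+1) ha (by omega) (mod_helper (by omega) (by omega)),
    row_ne' h0m (a+1) (by omega) _ (by omega),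
    colpow_mk h0n (m-1) (a+1) a (by omega) ha (mod_helper (by omega) (by omega)),
    row_ne' h0m a ha _ h1]

lemma P_pow_fix1 (s : ℕ) (a b : ℕ) (ha : a < m) (hb : b < n) (h1 : a ≠ 0) (h2 : b ≠ 0) :
    ((Pp m n hm hn)^s) (⟨a, ha⟩, ⟨b, hb⟩) = (⟨a, ha⟩, ⟨b, hb⟩) := by
  induction s with
  | zero => rfl
  | succ s ih => rw [pow_succ, Equiv.Perm.mul_apply, P_fix1 hm hn a b ha hb h1 h2, ih]

lemma P_pow_fix2 (s : ℕ) (a : ℕ) (ha : a < m) (h0n : 0 < n) (h1 : a ≠ 0) (h2 : a ≠ m-1) :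
    ((Pp m n hm hn)^s) (⟨a, ha⟩, ⟨0, h0n⟩) = (⟨a, ha⟩, ⟨0, h0n⟩) := by
  induction s with
  | zero => rfl
  | succ s ih => rw [pow_succ, Equiv.Perm.mul_apply, P_fix2 hm hn a ha h0n h1 h2, ih]

lemma U1 (h0m : 0 < m) (h0n : 0 < n) :
    Uu m n hm hn (⟨0, h0m⟩, ⟨0, h0n⟩) = (⟨0, h0m⟩, ⟨0, h0n⟩) := by
  simp only [Uu, Equiv.Perm.mul_apply]
  rw [col_mk h0n 0 1 (by omega) (by omega) (mod_helper (by omega) (by omega)),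
    row_ne' h0m 1 (by omega) _ (by omega),
    colpow_mk h0n (m-1) 1 0 (by omega) (by omega) (mod_helper (by omega) (by omega))]

lemma U2 (h0m : 0 < m) (b : ℕ) (hb : b < n) (h1 : 1 ≤ b) (h2 : b ≤ n-2) :
    Uu m n hm hn (⟨0, h0m⟩, ⟨b, hb⟩) = (⟨0, h0m⟩, ⟨b+1, by omega⟩) := by
  have h0n : (0:ℕ) < n := by omega
  simp only [Uu, Equiv.Perm.mul_apply]
  rw [col_ne' h0n _ b hb (by omega),
    row_mk h0m b (b+1) hb (by omega) (mod_helper (by omega) (by omega)),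
    colpow_ne' h0n (m-1) _ (b+1) (by omega) (by omega)]

lemma U3 (h0m : 0 < m) (hb : n-1 < n) :
    Uu m n hm hn (⟨0, h0m⟩, ⟨n-1, hb⟩) = (⟨m-1, by omega⟩, ⟨0, by omega⟩) := by
  have h0n : (0:ℕ) < n := by omega
  simp only [Uu, Equiv.Perm.mul_apply]
  rw [col_ne' h0n _ (n-1) hb (by omega),
    row_mk h0m (n-1) 0 hb (by omega) (mod_helper (by omega) (by omega)),
    colpow_mk h0n (m-1) 0 (m-1) (by omega) (by omega) (mod_helper (by omega) (by omega))]

lemma U4 (ha : m-1 < m) (h0n : 0 < n) :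
    Uu m n hm hn (⟨m-1, ha⟩, ⟨0, h0n⟩) = (⟨0, by omega⟩, ⟨1, by omega⟩) := by
  have h0m : (0:ℕ) < m := by omega
  simp only [Uu, Equiv.Perm.mul_apply]
  rw [col_mk h0n (m-1) 0 ha (by omega) (mod_helper (by omega) (by omega)),
    row_mk h0m 0 1 (by omega) (by omega) (mod_helper (by omega) (by omega)),
    colpow_ne' h0n (m-1) _ 1 (by omega) (by omega)]

lemma U5 (a : ℕ) (ha : a < m) (h0n : 0 < n) (h1 : a ≠ 0) (h2 : a ≠ m-1) :
    Uu m n hm hn (⟨a, ha⟩, ⟨0, h0n⟩) = (⟨a, ha⟩, ⟨0, h0n⟩) := by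
  have h0m : (0:ℕ) < m := by omega
  simp only [Uu, Equiv.Perm.mul_apply]
  rw [col_mk h0n a (a+1) ha (by omega) (mod_helper (by omega) (by omega)),
    row_ne' h0m (a+1) (by omega) _ (by omega),
    colpow_mk h0n (m-1) (a+1) a (by omega) ha (mod_helper (by omega) (by omega))]

lemma U6 (a b : ℕ) (ha : a < m) (hb : b < n) (h1 : a ≠ 0) (h2 : b ≠ 0) :
    Uu m n hm hn (⟨a, ha⟩, ⟨b, hb⟩) = (⟨a, ha⟩, ⟨b, hb⟩) := by
  have h0m : (0:ℕ) < m := by omega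
  have h0n : (0:ℕ) < n := by omega
  simp only [Uu, Equiv.Perm.mul_apply]
  rw [col_ne' h0n _ b hb h2, row_ne' h0m a ha _ h1, colpow_ne' h0n (m-1) _ b hb h2]


lemma c_cpow (h0n : 0 < n) (hm2 : 2 ≤ m) :
    colRot m n ⟨0, h0n⟩ * (colRot m n ⟨0, h0n⟩) ^ (m-1) = 1 := by
  rw [← pow_succ', show m - 1 + 1 = m from by omega]
  apply Equiv.ext
  rintro ⟨⟨a, ha⟩, ⟨b, hb⟩⟩
  by_cases hb0 : b = 0
  · subst hb0
    rw [Equiv.Perm.one_apply, colpow_mk h0n m a a ha ha (mod_helper ha (Or.inr rfl))]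
  · rw [Equiv.Perm.one_apply, colpow_ne' h0n m _ b hb hb0]

lemma Q_factor : Qq m n hm hn = Pp m n hm hn * Uu m n hm hn := by
  simp only [Qq, Pp, Uu, pow_two]
  simp only [mul_assoc]
  rw [show (colRot m n ⟨0, (by omega : (0:ℕ) < n)⟩ : Equiv.Perm (Fin m × Fin n)) *
      ((colRot m n ⟨0, by omega⟩) ^ (m-1) *
        (rowRot m n ⟨0, (by omega : (0:ℕ) < m)⟩ * colRot m n ⟨0, by omega⟩)) =
      rowRot m n ⟨0, by omega⟩ * colRot m n ⟨0, by omega⟩ from by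
    rw [← mul_assoc, c_cpow (by omega) hm, one_mul]]

end TorusAux

/- For even n, the sequence C₁ R² C₁^(m-1) R (C₁ R C₁^(m-1) R)^(n/2-1), applied left to
right, swaps positions (0,0) and (0,n-1) and fixes every other position. -/
open TorusAux in
theorem swap_sequence_of_even_n (m n : ℕ) (hm : 2 ≤ m) (hn : 2 ≤ n) (hne : Even n) :
    (rowRot m n ⟨0, by omega⟩ * (colRot m n ⟨0, by omega⟩) ^ (m - 1) *
        rowRot m n ⟨0, by omega⟩ * colRot m n ⟨0, by omega⟩) ^ (n / 2 - 1) *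
      (rowRot m n ⟨0, by omega⟩ * (colRot m n ⟨0, by omega⟩) ^ (m - 1) *
        (rowRot m n ⟨0, by omega⟩) ^ 2 * colRot m n ⟨0, by omega⟩) =
    Equiv.swap ((⟨0, by omega⟩ : Fin m), (⟨0, by omega⟩ : Fin n))
      ((⟨0, by omega⟩ : Fin m), (⟨n - 1, by omega⟩ : Fin n)) := by
  show Pp m n hm hn ^ (n / 2 - 1) * Qq m n hm hn = _
  rw [Q_factor hm hn, ← mul_assoc, ← pow_succ, show n/2-1+1 = n/2 from by omega]
  apply Equiv.ext
  rintro ⟨⟨a, ha⟩, ⟨b, hb⟩⟩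
  rw [Equiv.Perm.mul_apply]
  obtain ⟨l, hl⟩ := hne
  by_cases ha0 : a = 0
  · subst ha0
    by_cases hb0 : b = 0
    · subst hb0
      rw [U1 hm hn ha hb,
        show ((⟨0, ha⟩ : Fin m), (⟨0, hb⟩ : Fin n)) = iota m n hm hn 0 from
          (iota_eq0 hm hn 0 (Nat.zero_mod _)).symm,
        P_pow_iota hm hn ⟨l, hl⟩ (n/2) 0,
        iota_eq1 hm hn (0 + n/2) (n/2) (mod_helper (by omega) (by omega))
          (by omega) (by omega) (by omega),
        Equiv.swap_apply_left]
      all_goals simp only [Prod.mk.injEq, Fin.mk.injEq, true_and, and_true]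
      all_goals omega
    · by_cases hbn : b = n-1
      · subst hbn
        rw [U3 hm hn ha hb]
        have e : ((⟨m-1, by omega⟩ : Fin m), (⟨0, by omega⟩ : Fin n)) =
            iota m n hm hn (n/2+1) :=
          (iota_eq2 hm hn (n/2+1) (mod_helper (by omega) (by omega))).symm
        rw [e, P_pow_iota hm hn ⟨l, hl⟩ (n/2) (n/2+1),
          iota_eq0 hm hn (n/2+1+n/2) (mod_helper (by omega) (by omega)),
          Equiv.swap_apply_right]
        all_goals simp only [Prod.mk.injEq, Fin.mk.injEq, true_and, and_true]
        all_goals omega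
      · rw [U2 hm hn ha b hb (by omega) (by omega)]
        rcases Nat.even_or_odd b with ⟨k, hk⟩ | ⟨k, hk⟩
        · subst hk
          have e : ((⟨0, by omega⟩ : Fin m), (⟨k+k+1, by omega⟩ : Fin n)) =
              iota m n hm hn (k+1) := by
            rw [iota_eq1 hm hn (k+1) (k+1) (mod_helper (by omega) (by omega))
              (by omega) (by omega) (by omega)]
            all_goals simp only [Prod.mk.injEq, Fin.mk.injEq, true_and, and_true]
            all_goals omega
          rw [e, P_pow_iota hm hn ⟨l, hl⟩ (n/2) (k+1),
            iota_eq3 hm hn (k+1+n/2) (k+1+n/2) (mod_helper (by omega) (by omega))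
              (by omega) (by omega) (by omega),
            Equiv.swap_apply_of_ne_of_ne
              (by simp only [ne_eq, Prod.mk.injEq, Fin.mk.injEq]; omega)
              (by simp only [ne_eq, Prod.mk.injEq, Fin.mk.injEq]; omega)]
          all_goals simp only [Prod.mk.injEq, Fin.mk.injEq, true_and, and_true]
          all_goals omega
        · subst hk
          have e : ((⟨0, by omega⟩ : Fin m), (⟨2*k+1+1, by omega⟩ : Fin n)) =
              iota m n hm hn (n/2+k+2) := by
            rw [iota_eq3 hm hn (n/2+k+2) (n/2+k+2) (mod_helper (by omega) (by omega))
              (by omega) (by omega) (by omega)]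
            all_goals simp only [Prod.mk.injEq, Fin.mk.injEq, true_and, and_true]
            all_goals omega
          rw [e, P_pow_iota hm hn ⟨l, hl⟩ (n/2) (n/2+k+2),
            iota_eq1 hm hn (n/2+k+2+n/2) (k+1) (mod_helper (by omega) (by omega))
              (by omega) (by omega) (by omega),
            Equiv.swap_apply_of_ne_of_ne
              (by simp only [ne_eq, Prod.mk.injEq, Fin.mk.injEq]; omega)
              (by simp only [ne_eq, Prod.mk.injEq, Fin.mk.injEq]; omega)]
          all_goals simp only [Prod.mk.injEq, Fin.mk.injEq, true_and, and_true]
          all_goals omega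
  · by_cases hb0 : b = 0
    · subst hb0
      by_cases ham : a = m-1
      · subst ham
        rw [U4 hm hn ha hb]
        have e : ((⟨0, by omega⟩ : Fin m), (⟨1, by omega⟩ : Fin n)) =
            iota m n hm hn 1 := by
          rw [iota_eq1 hm hn 1 1 (mod_helper (by omega) (by omega))
            (by omega) (by omega) (by omega)]
        rw [e, P_pow_iota hm hn ⟨l, hl⟩ (n/2) 1,
          iota_eq2 hm hn (1+n/2) (mod_helper (by omega) (by omega)),
          Equiv.swap_apply_of_ne_of_ne
            (by simp only [ne_eq, Prod.mk.injEq, Fin.mk.injEq]; omega)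
            (by simp only [ne_eq, Prod.mk.injEq, Fin.mk.injEq]; omega)]
        all_goals simp only [Prod.mk.injEq, Fin.mk.injEq, true_and, and_true]
        all_goals omega
      · rw [U5 hm hn a ha hb ha0 ham, P_pow_fix2 hm hn (n/2) a ha hb ha0 ham,
          Equiv.swap_apply_of_ne_of_ne
            (by simp only [ne_eq, Prod.mk.injEq, Fin.mk.injEq]; omega)
            (by simp only [ne_eq, Prod.mk.injEq, Fin.mk.injEq]; omega)]
    · rw [U6 hm hn a b ha hb ha0 hb0, P_pow_fix1 hm hn (n/2) a b ha hb ha0 hb0,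
        Equiv.swap_apply_of_ne_of_ne
          (by simp only [ne_eq, Prod.mk.injEq, Fin.mk.injEq]; omega)
          (by simp only [ne_eq, Prod.mk.injEq, Fin.mk.injEq]; omega)]
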